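/- Let f, g : ℕ → ℝ be sequences with f(n) ≠ 0 and g(n) ≠ 0 for all n, and suppose f(n) ~ g(n), i.e., lim_{n→∞} f(n)/g(n) = 1. If f is Benford, then g is Benford. -/

import Mathlib

open Filter Topology

/-- `|x|` begins with the base-`k` digit string of `d`:
there is an integer `m ≥ 0` with `d·k^m ≤ |x| < (d+1)·k^m`. -/
def BeginsWith (k d : ℕ) (x : ℝ) : Prop :=
  ∃ m : ℕ, (d : ℝ) * (k : ℝ) ^ m ≤ |x| ∧ |x| < ((d : ℝ) + 1) * (k : ℝ) ^ m

open scoped Classical in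
/-- The set `S ⊆ ℕ` has natural density `r`. -/
def HasNatDensity (S : Set ℕ) (r : ℝ) : Prop :=
  Tendsto (fun N : ℕ => (((Finset.range N).filter (fun n => n ∈ S)).card : ℝ) / N)
    atTop (𝓝 r)

/-- The sequence `a` is Benford. -/
def IsBenford (a : ℕ → ℝ) : Prop :=
  ∀ k : ℕ, 2 ≤ k → ∀ d : ℕ, 0 < d →
    HasNatDensity {n | BeginsWith k d (a n)} (Real.logb k (d + 1) - Real.logb k d)

open scoped Classical in
/-- The real sequence `x` is uniformly distributed modulo 1. -/
def UnifDistMod1 (x : ℕ → ℝ) : Prop :=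
  ∀ a b : ℝ, 0 ≤ a → a < b → b ≤ 1 →
    Tendsto (fun N : ℕ =>
        (((Finset.Icc 1 N).filter (fun n => Int.fract (x n) ∈ Set.Ico a b)).card : ℝ) / N)
      atTop (𝓝 (b - a))

open scoped Classical

/-- counting function with a pinned classical instance -/
noncomputable def cnt (P : ℕ → Prop) (N : ℕ) : ℕ :=
  (@Finset.filter ℕ P (fun n => Classical.propDecidable (P n)) (Finset.range N)).card

lemma mem_cntfilter {P : ℕ → Prop} {N n : ℕ} :
    n ∈ (@Finset.filter ℕ P (fun n => Classical.propDecidable (P n)) (Finset.range N)) ↔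
      n < N ∧ P n := by
  rw [Finset.mem_filter, Finset.mem_range]

lemma hasNatDensity_iff (P : ℕ → Prop) (r : ℝ) :
    HasNatDensity {n | P n} r ↔ Tendsto (fun N : ℕ => (cnt P N : ℝ) / N) atTop (𝓝 r) := by
  unfold HasNatDensity
  have e : ∀ N : ℕ, (((Finset.range N).filter (fun n => n ∈ {n | P n})).card : ℝ) = (cnt P N : ℝ) := by
    intro N
    unfold cnt
    exact congrArg _ (congrArg Finset.card (Finset.filter_congr fun n _ => by simp))
  constructor <;> intro h <;>
  · refine h.congr fun N => ?_
    rw [e N]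

lemma cnt_congr {P Q : ℕ → Prop} (h : ∀ n, P n ↔ Q n) (N : ℕ) : cnt P N = cnt Q N := by
  unfold cnt
  congr 1
  exact Finset.filter_congr fun n _ => by simp [h n]

lemma cnt_imp_le {P Q : ℕ → Prop} (h : ∀ n, P n → Q n) (N : ℕ) : cnt P N ≤ cnt Q N := by
  apply Finset.card_le_card
  intro n hn
  rw [mem_cntfilter] at hn ⊢
  exact ⟨hn.1, h n hn.2⟩

lemma cnt_or_le (P Q : ℕ → Prop) (N : ℕ) :
    cnt (fun n => P n ∨ Q n) N ≤ cnt P N + cnt Q N := by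
  unfold cnt
  refine le_trans (Finset.card_le_card ?_) (Finset.card_union_le _ _)
  intro n hn
  rw [mem_cntfilter] at hn
  rw [Finset.mem_union, mem_cntfilter, mem_cntfilter]
  tauto

lemma cnt_or_eq {P Q : ℕ → Prop} (h : ∀ n, P n → Q n → False) (N : ℕ) :
    cnt (fun n => P n ∨ Q n) N = cnt P N + cnt Q N := by
  refine le_antisymm (cnt_or_le P Q N) ?_
  unfold cnt
  rw [← Finset.card_union_of_disjoint]
  · apply Finset.card_le_card
    intro n hn
    rw [Finset.mem_union, mem_cntfilter, mem_cntfilter] at hn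
    rw [mem_cntfilter]
    tauto
  · rw [Finset.disjoint_left]
    intro n hn hn'
    rw [mem_cntfilter] at hn hn'
    exact h n hn.2 hn'.2

lemma cnt_true (N : ℕ) : cnt (fun _ => True) N = N := by
  unfold cnt
  apply le_antisymm
  · calc _ ≤ (Finset.range N).card := Finset.card_le_card fun n hn => by
            rw [mem_cntfilter] at hn; exact Finset.mem_range.2 hn.1
      _ = N := Finset.card_range N
  · calc N = (Finset.range N).card := (Finset.card_range N).symm
      _ ≤ _ := Finset.card_le_card fun n hn => by
            rw [mem_cntfilter]; exact ⟨Finset.mem_range.1 hn, trivial⟩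

lemma cnt_not (P : ℕ → Prop) (N : ℕ) : cnt P N + cnt (fun n => ¬ P n) N = N := by
  have h1 : cnt (fun n => P n ∨ ¬ P n) N = cnt P N + cnt (fun n => ¬ P n) N :=
    cnt_or_eq (fun n hp hnp => hnp hp) N
  have h2 : cnt (fun n => P n ∨ ¬ P n) N = cnt (fun _ => True) N :=
    cnt_congr (fun n => by tauto) N
  rw [← h1, h2, cnt_true]

lemma cnt_tail_le (P : ℕ → Prop) (n₁ N : ℕ) : cnt (fun n => n < n₁ ∧ P n) N ≤ n₁ := by
  unfold cnt
  refine le_trans (Finset.card_le_card (fun n hn => ?_)) (le_of_eq (Finset.card_range n₁))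
  rw [mem_cntfilter] at hn
  rw [Finset.mem_range]
  exact hn.2.1

lemma cnt_le_of_imp_tail {P Q : ℕ → Prop} (n₁ : ℕ) (h : ∀ n, n₁ ≤ n → P n → Q n) (N : ℕ) :
    cnt P N ≤ cnt Q N + n₁ := by
  calc cnt P N ≤ cnt (fun n => Q n ∨ (n < n₁ ∧ P n)) N := by
        apply cnt_imp_le
        intro n hn
        rcases lt_or_ge n n₁ with h' | h'
        · exact Or.inr ⟨h', hn⟩
        · exact Or.inl (h n h' hn)
    _ ≤ cnt Q N + cnt (fun n => n < n₁ ∧ P n) N := cnt_or_le _ _ _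
    _ ≤ cnt Q N + n₁ := by have := cnt_tail_le P n₁ N; omega

lemma cnt_zero {P : ℕ → Prop} (h : ∀ n, ¬ P n) (N : ℕ) : cnt P N = 0 := by
  unfold cnt
  rw [Finset.card_eq_zero, Finset.filter_eq_empty_iff]
  exact fun _ _ hp => h _ hp

/-- auxiliary interval predicate -/
def Tset (k a b : ℕ) (x : ℝ) : Prop :=
  ∃ m : ℕ, (a : ℝ) * (k : ℝ) ^ m ≤ |x| ∧ |x| < (b : ℝ) * (k : ℝ) ^ m

lemma tset_succ (k d : ℕ) (x : ℝ) : Tset k d (d+1) x ↔ BeginsWith k d x := by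
  unfold Tset BeginsWith
  push_cast
  rfl

lemma tset_split {k a b c : ℕ} (hab : a ≤ b) (hbc : b ≤ c) (x : ℝ) :
    Tset k a c x ↔ Tset k a b x ∨ Tset k b c x := by
  constructor
  · rintro ⟨m, h1, h2⟩
    by_cases h : |x| < (b : ℝ) * (k : ℝ) ^ m
    · exact Or.inl ⟨m, h1, h⟩
    · exact Or.inr ⟨m, not_lt.1 h, h2⟩
  · rintro (⟨m, h1, h2⟩ | ⟨m, h1, h2⟩)
    · refine ⟨m, h1, lt_of_lt_of_le h2 ?_⟩
      have : (b : ℝ) ≤ c := Nat.cast_le.2 hbc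
      have : (0:ℝ) ≤ (k : ℝ) ^ m := by positivity
      nlinarith
    · refine ⟨m, le_trans ?_ h1, h2⟩
      have : (a : ℝ) ≤ b := Nat.cast_le.2 hab
      have : (0:ℝ) ≤ (k : ℝ) ^ m := by positivity
      nlinarith

lemma tset_disj {k s a b c : ℕ} (hk : 2 ≤ k) (hsa : (k:ℕ)^s ≤ a) (hab : a ≤ b)
    (hc : c ≤ k^(s+1)) (x : ℝ) (hx1 : Tset k a b x) (hx2 : Tset k b c x) : False := by
  obtain ⟨m, h1, h2⟩ := hx1
  obtain ⟨m', h1', h2'⟩ := hx2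
  have hK1 : (1:ℝ) ≤ (k : ℝ) := by
    have : (1:ℕ) ≤ k := by omega
    exact_mod_cast this
  rcases le_or_gt m m' with h | h
  · have hb0 : (0:ℝ) ≤ (b:ℝ) := Nat.cast_nonneg b
    have : (b:ℝ) * (k:ℝ)^m ≤ (b:ℝ) * (k:ℝ)^m' :=
      mul_le_mul_of_nonneg_left (pow_le_pow_right₀ hK1 h) hb0
    linarith
  · -- m' < m
    have hcR : (c:ℝ) ≤ (k:ℝ)^(s+1) := by
      have : ((c:ℕ):ℝ) ≤ ((k^(s+1) : ℕ) : ℝ) := Nat.cast_le.2 hc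
      push_cast at this
      exact this
    have haR : (k:ℝ)^s ≤ (a:ℝ) := by
      have : ((k^s : ℕ):ℝ) ≤ ((a:ℕ):ℝ) := Nat.cast_le.2 hsa
      push_cast at this
      exact this
    have hkm : (0:ℝ) ≤ (k:ℝ)^m' := by positivity
    have e1 : (c:ℝ) * (k:ℝ)^m' ≤ (k:ℝ)^(s+1) * (k:ℝ)^m' :=
      mul_le_mul_of_nonneg_right hcR hkm
    have e2 : (k:ℝ)^(s+1) * (k:ℝ)^m' = (k:ℝ)^(s+1+m') := by rw [← pow_add]
    have e3 : (k:ℝ)^(s+1+m') ≤ (k:ℝ)^(s+m) := pow_le_pow_right₀ hK1 (by omega)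
    have e4 : (k:ℝ)^(s+m) = (k:ℝ)^s * (k:ℝ)^m := by rw [← pow_add]
    have e5 : (k:ℝ)^s * (k:ℝ)^m ≤ (a:ℝ) * (k:ℝ)^m :=
      mul_le_mul_of_nonneg_right haR (by positivity)
    linarith

lemma hB_cnt (f : ℕ → ℝ) {k : ℕ} (hk : 2 ≤ k) (hB : IsBenford f) {d : ℕ} (hd : 0 < d) :
    Tendsto (fun N : ℕ => (cnt (fun n => Tset k d (d+1) (f n)) N : ℝ) / N) atTop
      (𝓝 (Real.logb k ((d+1 : ℕ)) - Real.logb k d)) := by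
  have h := (hasNatDensity_iff _ _).1 (hB k hk d hd)
  have h2 := h.congr (fun N => by
    rw [cnt_congr (fun n => (tset_succ k d (f n)).symm) N])
  have e : ((d:ℕ):ℝ) + 1 = ((d+1:ℕ):ℝ) := by push_cast; ring
  rw [e] at h2
  exact h2

lemma densT (f : ℕ → ℝ) {k : ℕ} (hk : 2 ≤ k) (hB : IsBenford f) (s : ℕ) :
    ∀ c a : ℕ, k^s ≤ a → a + c ≤ k^(s+1) →
    Tendsto (fun N : ℕ => (cnt (fun n => Tset k a (a+c) (f n)) N : ℝ) / N) atTop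
      (𝓝 (Real.logb k ((a+c : ℕ)) - Real.logb k a)) := by
  intro c
  induction c with
  | zero =>
    intro a ha hab
    have hz : ∀ N, cnt (fun n => Tset k a (a+0) (f n)) N = 0 := by
      intro N
      apply cnt_zero
      rintro n ⟨m, h1, h2⟩
      simp only [Nat.add_zero] at h2
      linarith
    have : (fun N : ℕ => (cnt (fun n => Tset k a (a+0) (f n)) N : ℝ) / N) = fun _ => (0:ℝ) := by
      funext N; rw [hz N]; simp
    rw [this]
    simp only [Nat.add_zero, sub_self]
    exact tendsto_const_nhds
  | succ c IH =>
    intro a ha hab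
    have hIH := IH a ha (by omega)
    have hd : 0 < a + c := by
      have : 1 ≤ k^s := Nat.one_le_pow _ _ (by omega)
      omega
    have hD := hB_cnt f hk hB hd
    have key : ∀ N, cnt (fun n => Tset k a (a+(c+1)) (f n)) N
        = cnt (fun n => Tset k a (a+c) (f n)) N + cnt (fun n => Tset k (a+c) (a+c+1) (f n)) N := by
      intro N
      have e1 : ∀ n, Tset k a (a+(c+1)) (f n) ↔ (Tset k a (a+c) (f n) ∨ Tset k (a+c) (a+c+1) (f n)) := by
        intro n
        have h' := tset_split (k := k) (a := a) (b := a+c) (c := (a+c)+1)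
          (Nat.le_add_right a c) (Nat.le_succ _) (f n)
        rw [show a + (c+1) = (a+c)+1 by omega]
        exact h'
      rw [cnt_congr e1 N]
      exact cnt_or_eq (fun n h1 h2 =>
        tset_disj (s := s) hk ha (Nat.le_add_right a c) (by omega) (f n) h1 h2) N
    have hsum := hIH.add hD
    have h2 := hsum.congr (fun N => by
      rw [← add_div, ← Nat.cast_add, ← key N])
    have e : (Real.logb k ((a+c : ℕ)) - Real.logb k a)
        + (Real.logb k ((a+c+1 : ℕ)) - Real.logb k ((a+c:ℕ)))
        = Real.logb k ((a+(c+1) : ℕ)) - Real.logb k a := by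
      rw [show a + (c+1) = (a+c)+1 by omega]
      ring
    rw [e] at h2
    exact h2

lemma densT' (f : ℕ → ℝ) {k : ℕ} (hk : 2 ≤ k) (hB : IsBenford f) (s a b : ℕ)
    (h1 : k^s ≤ a) (h2 : a ≤ b) (h3 : b ≤ k^(s+1)) :
    Tendsto (fun N : ℕ => (cnt (fun n => Tset k a b (f n)) N : ℝ) / N) atTop
      (𝓝 (Real.logb k b - Real.logb k a)) := by
  have h := densT f hk hB s (b - a) a h1 (by omega)
  rw [show a + (b - a) = b from by omega] at h
  exact h

lemma cnt_compl_tendsto {P : ℕ → Prop} {r : ℝ}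
    (h : Tendsto (fun N : ℕ => (cnt P N : ℝ) / N) atTop (𝓝 r)) :
    Tendsto (fun N : ℕ => (cnt (fun n => ¬ P n) N : ℝ) / N) atTop (𝓝 (1 - r)) := by
  have h2 := (tendsto_const_nhds (x := (1:ℝ)) (f := (atTop : Filter ℕ))).sub h
  refine h2.congr' ?_
  filter_upwards [eventually_ge_atTop 1] with N hN
  have hc := cnt_not P N
  have hN0 : (N:ℝ) ≠ 0 := by positivity
  have hcc : (cnt (fun n => ¬ P n) N : ℝ) = N - cnt P N := by
    have := congrArg (fun x : ℕ => (x:ℝ)) hc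
    push_cast at this
    linarith
  rw [hcc]
  field_simp

lemma logb_bracket {k : ℕ} (hk : 2 ≤ k) {x : ℝ} (hx : 1 ≤ x) :
    Real.logb k (x+1) - Real.logb k x ≤ 2 / x := by
  have hx0 : 0 < x := by linarith
  have hlogk : (1:ℝ)/2 ≤ Real.log k := by
    have h2 : (2:ℝ) ≤ (k:ℝ) := by exact_mod_cast hk
    have h4 : Real.log 2 ≤ Real.log k := Real.log_le_log (by norm_num) h2
    have h3 := Real.log_two_gt_d9
    linarith
  have hnum : Real.log (x+1) - Real.log x ≤ 1/x := by
    rw [← Real.log_div (by linarith) (by linarith)]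
    have h1 : (x+1)/x = 1 + 1/x := by field_simp
    rw [h1]
    have := Real.log_le_sub_one_of_pos (show (0:ℝ) < 1 + 1/x by positivity)
    linarith
  have hnn : 0 ≤ Real.log (x+1) - Real.log x := by
    have := Real.log_le_log hx0 (show x ≤ x + 1 by linarith)
    linarith
  unfold Real.logb
  rw [div_sub_div_same]
  calc (Real.log (x+1) - Real.log x) / Real.log k
      ≤ (Real.log (x+1) - Real.log x) / (1/2) := by
        apply div_le_div_of_nonneg_left hnn (by norm_num) hlogk
    _ = 2 * (Real.log (x+1) - Real.log x) := by ring
    _ ≤ 2 * (1/x) := by linarith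
    _ = 2 / x := by ring

lemma abs_ratio_bound {x y δ : ℝ} (hy : y ≠ 0) (hδ4 : δ ≤ 1/4) (ht : |x/y - 1| < δ) :
    (1-δ)*|y| ≤ |x| ∧ |x| ≤ (1+δ)*|y| := by
  have ht' := abs_lt.1 ht
  have htpos : 0 < x / y := by linarith [ht'.1]
  have hfg : |x| = (x / y) * |y| := by
    rw [← abs_of_pos htpos, ← abs_mul, div_mul_cancel₀ _ hy]
  constructor
  · rw [hfg]
    exact mul_le_mul_of_nonneg_right (by linarith [ht'.1]) (abs_nonneg _)
  · rw [hfg]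
    exact mul_le_mul_of_nonneg_right (by linarith [ht'.2]) (abs_nonneg _)

lemma key_up {k d j a1 a2 a3 a4 C' K : ℕ} {x y δ : ℝ}
    (hkR1 : (1:ℝ) < (k:ℝ))
    (hK1R : (1:ℝ) ≤ (K:ℝ))
    (ha1R : ((a1:ℕ):ℝ) = (d:ℝ)*(k:ℝ)^j - 1)
    (ha3R : ((a3:ℕ):ℝ) = ((d:ℝ)+1)*(k:ℝ)^j)
    (ha4R : ((a4:ℕ):ℝ) = ((d:ℝ)+1)*(k:ℝ)^j + 1)
    (hC'R : ((C':ℕ):ℝ) = 2*((a3:ℕ):ℝ))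
    (hδa3 : δ * (((d:ℝ)+1)*(k:ℝ)^j) = 1)
    (hδpos : 0 < δ) (hδ4 : δ ≤ 1/4)
    (hl : (1-δ)*|y| ≤ |x|) (hh : |x| ≤ (1+δ)*|y|)
    (hBW : BeginsWith k d y) :
    (Tset k a1 a2 x ∨ Tset k a2 a3 x ∨ Tset k a3 a4 x) ∨ ¬ Tset K C' K x := by
  obtain ⟨m, hm1, hm2⟩ := hBW
  by_cases hsm : |y| < ((a3:ℕ):ℝ)
  · right
    rintro ⟨m', hw1, hw2⟩
    have hKp : (1:ℝ) ≤ (K:ℝ)^m' := one_le_pow₀ hK1R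
    have hCle : (C':ℝ) ≤ (C':ℝ) * (K:ℝ)^m' :=
      le_mul_of_one_le_right (by positivity) hKp
    have hfc : |x| < ((C':ℕ):ℝ) := by
      rw [hC'R]
      have hgnn : 0 ≤ |y| := abs_nonneg _
      have ha34 : (4:ℝ) ≤ ((a3:ℕ):ℝ) := by
        rw [ha3R]
        nlinarith [hδa3, hδpos, hδ4]
      nlinarith [hδa3, ha3R, hh, hsm, hδpos, hδ4]
    linarith
  · left
    have hgb : ((d:ℝ)+1)*(k:ℝ)^j ≤ |y| := by rw [← ha3R]; exact not_lt.1 hsm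
    have hjm : j ≤ m := by
      have hlt : ((d:ℝ)+1)*(k:ℝ)^j < ((d:ℝ)+1)*(k:ℝ)^m := lt_of_le_of_lt hgb hm2
      have h2 := lt_of_mul_lt_mul_left hlt (by positivity : (0:ℝ) ≤ (d:ℝ)+1)
      have h3 := (pow_lt_pow_iff_right₀ hkR1).1 h2
      omega
    set m₀ := m - j with hm₀def
    have hmeq : m = j + m₀ := by omega
    have hpw : (k:ℝ)^m = (k:ℝ)^j * (k:ℝ)^m₀ := by rw [hmeq, pow_add]
    have hkm₀ : (0:ℝ) < (k:ℝ)^m₀ := by positivity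
    have hkjR : (0:ℝ) < (k:ℝ)^j := by positivity
    have hd0 : (0:ℝ) ≤ (d:ℝ) := Nat.cast_nonneg d
    have hlowf : ((a1:ℕ):ℝ)*(k:ℝ)^m₀ ≤ |x| := by
      rw [ha1R]
      have s1 : (1-δ)*((d:ℝ)*(k:ℝ)^m) ≤ (1-δ)*|y| :=
        mul_le_mul_of_nonneg_left hm1 (by linarith)
      have s2 : ((d:ℝ)*(k:ℝ)^j - 1)*(k:ℝ)^m₀ ≤ (1-δ)*((d:ℝ)*(k:ℝ)^m) := by
        rw [hpw]
        nlinarith [hδa3, hδpos, hkm₀, hkjR, hd0]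
      linarith
    have hhif : |x| < ((a4:ℕ):ℝ)*(k:ℝ)^m₀ := by
      rw [ha4R]
      have s1 : (1+δ)*|y| < (1+δ)*(((d:ℝ)+1)*(k:ℝ)^m) :=
        mul_lt_mul_of_pos_left hm2 (by linarith)
      have s2 : (1+δ)*(((d:ℝ)+1)*(k:ℝ)^m) = (((d:ℝ)+1)*(k:ℝ)^j + 1)*(k:ℝ)^m₀ := by
        rw [hpw]
        linear_combination (k:ℝ)^m₀ * hδa3
      linarith
    rcases lt_or_ge (|x|) (((a2:ℕ):ℝ)*(k:ℝ)^m₀) with hc1 | hc1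
    · exact Or.inl ⟨m₀, hlowf, hc1⟩
    · rcases lt_or_ge (|x|) (((a3:ℕ):ℝ)*(k:ℝ)^m₀) with hc2 | hc2
      · exact Or.inr (Or.inl ⟨m₀, hc1, hc2⟩)
      · exact Or.inr (Or.inr ⟨m₀, hc2, hhif⟩)

lemma key_lo {k d j b1 b2 : ℕ} {x y δ : ℝ}
    (hk0 : (0:ℝ) < (k:ℝ))
    (hb1R : ((b1:ℕ):ℝ) = (d:ℝ)*(k:ℝ)^j + 1)
    (hb2R : ((b2:ℕ):ℝ) = ((d:ℝ)+1)*(k:ℝ)^j - 1)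
    (hδa3 : δ * (((d:ℝ)+1)*(k:ℝ)^j) = 1)
    (hδpos : 0 < δ) (hδ4 : δ ≤ 1/4)
    (hl : (1-δ)*|y| ≤ |x|) (hh : |x| ≤ (1+δ)*|y|)
    (hT : Tset k b1 b2 x) : BeginsWith k d y := by
  obtain ⟨m₀, hw1, hw2⟩ := hT
  have hpw : (k:ℝ)^(j+m₀) = (k:ℝ)^j * (k:ℝ)^m₀ := pow_add _ _ _
  have hkm₀ : (0:ℝ) < (k:ℝ)^m₀ := by positivity
  have hkjR : (0:ℝ) < (k:ℝ)^j := by positivity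
  have hd0 : (0:ℝ) ≤ (d:ℝ) := Nat.cast_nonneg d
  refine ⟨j + m₀, ?_, ?_⟩
  · have hkey : (1+δ)*((d:ℝ)*(k:ℝ)^(j+m₀)) ≤ ((b1:ℕ):ℝ)*(k:ℝ)^m₀ := by
      rw [hb1R, hpw]
      have hstep : δ*((d:ℝ)*(k:ℝ)^j) ≤ 1 := by nlinarith [hδa3, hδpos, hkjR]
      nlinarith [hstep, hkm₀]
    have hchain : (1+δ)*((d:ℝ)*(k:ℝ)^(j+m₀)) ≤ (1+δ)*|y| :=
      le_trans hkey (le_trans hw1 hh)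
    exact le_of_mul_le_mul_left hchain (by linarith)
  · have hkey : ((b2:ℕ):ℝ)*(k:ℝ)^m₀ = (1-δ)*(((d:ℝ)+1)*(k:ℝ)^(j+m₀)) := by
      rw [hb2R, hpw]
      linear_combination ((k:ℝ)^m₀) * hδa3
    have hchain : (1-δ)*|y| < (1-δ)*(((d:ℝ)+1)*(k:ℝ)^(j+m₀)) := by
      rw [← hkey]
      exact lt_of_le_of_lt hl hw2
    exact lt_of_mul_lt_mul_left hchain (by linarith)


set_option maxHeartbeats 2000000 in
/-- If `f ~ g` and `f` is Benford, then `g` is Benford. -/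
theorem isBenford_of_asymp (f g : ℕ → ℝ) (hf : ∀ n, f n ≠ 0) (hg : ∀ n, g n ≠ 0)
    (hasymp : Tendsto (fun n => f n / g n) atTop (𝓝 1))
    (hB : IsBenford f) : IsBenford g := by
  intro k hk d hd
  rw [hasNatDensity_iff]
  set L := Real.logb k (d + 1) - Real.logb k d with hL
  rw [Metric.tendsto_nhds]
  intro ε hε
  -- choose j
  obtain ⟨j₀, hj₀⟩ := exists_nat_gt (32 / ε)
  set j := j₀ + 1 with hjdef
  have hjR : 32 / ε < (j : ℝ) := by
    rw [hjdef]; push_cast; linarith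
  have hj1 : 1 ≤ j := by omega
  -- digit-level data
  set s := Nat.log k d with hs
  have hsd : k ^ s ≤ d := Nat.pow_log_le_self k (by omega)
  have hds : d + 1 ≤ k ^ (s + 1) := Nat.lt_pow_succ_log_self (by omega) d
  have hkj2 : 2 ≤ k ^ j := le_trans hk (Nat.le_self_pow (by omega) k)
  have hjkj : j < k ^ j := Nat.lt_pow_self (n := j) (by omega : 1 < k)
  set a1 := d * k ^ j - 1 with ha1
  set a2 := d * k ^ j with ha2
  set a3 := (d + 1) * k ^ j with ha3
  set a4 := a3 + 1 with ha4
  set b1 := a2 + 1 with hb1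
  set b2 := a3 - 1 with hb2
  have ha2ge : 2 ≤ a2 := by
    have : 1 * 2 ≤ d * k ^ j := Nat.mul_le_mul (by omega) hkj2
    omega
  have ha12 : a1 + 1 = a2 := by omega
  have ha3ge : 4 ≤ a3 := by
    have : 2 * 2 ≤ (d + 1) * k ^ j := Nat.mul_le_mul (by omega) hkj2
    omega
  have ha2a3 : a2 + k ^ j = a3 := by rw [ha2, ha3]; ring
  have hja1 : j ≤ a1 := by
    have : k ^ j ≤ d * k ^ j := Nat.le_mul_of_pos_left _ (by omega)
    omega
  have hja2 : j ≤ a2 := by omega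
  have hja3 : j ≤ a3 := by omega
  have hjb2 : j ≤ b2 := by omega
  -- level bounds at s + j
  have hlev1 : k ^ (s + j) ≤ a2 := by
    rw [pow_add]
    exact Nat.mul_le_mul_right _ hsd
  have hlev2 : a3 ≤ k ^ (s + j + 1) := by
    have : a3 ≤ k ^ (s + 1) * k ^ j := Nat.mul_le_mul_right _ hds
    calc a3 ≤ k ^ (s + 1) * k ^ j := this
      _ = k ^ (s + j + 1) := by rw [← pow_add]; ring_nf
  -- choose p, K for the smallness argument
  obtain ⟨p, hp⟩ := exists_nat_gt (16 / ε)
  have hp1 : 1 ≤ p := by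
    by_contra h
    have : p = 0 := by omega
    rw [this] at hp
    simp at hp
    have : 0 < 16 / ε := by positivity
    linarith
  set C' := 2 * a3 with hC'
  set K := C' ^ p with hK
  have hC'2 : 2 ≤ C' := by omega
  have hCK : C' ≤ K := Nat.le_self_pow (by omega) C'
  have hK2 : 2 ≤ K := le_trans hC'2 hCK
  -- density facts
  have hQ1 := hB_cnt f hk hB (d := a1) (by omega)
  rw [ha12] at hQ1
  have hQ2 := densT' f hk hB (s + j) a2 a3 hlev1 (by omega) hlev2
  have hQ3 := hB_cnt f hk hB (d := a3) (by omega)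
  rw [← ha4] at hQ3
  have hLo := densT' f hk hB (s + j) b1 b2 (by omega) (by omega) (by omega)
  have hW := densT' f hK2 hB 0 C' K (by simpa using hC'2.trans' (by omega)) hCK (by simpa using le_refl K)
  have hWc := cnt_compl_tendsto hW
  -- value computations
  have hkR1 : (1:ℝ) < (k:ℝ) := by exact_mod_cast (by omega : 1 < k)
  have hkjR : (0:ℝ) < (k:ℝ) ^ j := by positivity
  have ha1R : ((a1:ℕ):ℝ) = (d:ℝ) * (k:ℝ) ^ j - 1 := by
    rw [ha1, ha2]
    push_cast [Nat.cast_sub (show 1 ≤ d * k ^ j by omega)]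
    ring
  have ha2R : ((a2:ℕ):ℝ) = (d:ℝ) * (k:ℝ) ^ j := by rw [ha2]; push_cast; ring
  have ha3R : ((a3:ℕ):ℝ) = ((d:ℝ) + 1) * (k:ℝ) ^ j := by rw [ha3]; push_cast; ring
  have ha4R : ((a4:ℕ):ℝ) = ((d:ℝ) + 1) * (k:ℝ) ^ j + 1 := by rw [ha4]; push_cast [ha3R]; ring
  have hb1R : ((b1:ℕ):ℝ) = (d:ℝ) * (k:ℝ) ^ j + 1 := by rw [hb1]; push_cast [ha2R]; ring
  have hb2R : ((b2:ℕ):ℝ) = ((d:ℝ) + 1) * (k:ℝ) ^ j - 1 := by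
    rw [hb2]
    push_cast [Nat.cast_sub (show 1 ≤ a3 by omega), ha3R]
    ring
  -- r2 = L
  have hr2 : Real.logb k (a3:ℕ) - Real.logb k (a2:ℕ) = L := by
    rw [ha3R, ha2R, hL]
    rw [Real.logb_mul (by positivity) (by positivity),
        Real.logb_mul (by exact_mod_cast (by omega : d ≠ 0)) (by positivity)]
    push_cast
    ring
  -- bracket bounds
  have hjRpos : (0:ℝ) < (j:ℝ) := by exact_mod_cast (by omega : 0 < j)
  have h2j : 2 / (j:ℝ) < ε / 16 := by
    rw [div_lt_div_iff₀ hjRpos (by norm_num)]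
    have h32 : 32 < (j:ℝ) * ε := (div_lt_iff₀ hε).1 hjR
    nlinarith [h32, hε, hjRpos]
  have hbr : ∀ x : ℕ, j ≤ x → Real.logb k ((x+1:ℕ)) - Real.logb k (x:ℕ) < ε/16 := by
    intro x hx
    have hx1 : (1:ℝ) ≤ (x:ℝ) := by exact_mod_cast le_trans hj1 hx
    have hb' := logb_bracket hk hx1
    have hcast : ((x+1:ℕ):ℝ) = (x:ℝ)+1 := by push_cast; ring
    have h2x : 2/(x:ℝ) ≤ 2/(j:ℝ) := by
      apply div_le_div_of_nonneg_left (by norm_num) hjRpos (by exact_mod_cast hx)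
    rw [hcast]
    linarith only [hb', h2x, hx1, h2j]
  have hr1 : Real.logb k (a2:ℕ) - Real.logb k (a1:ℕ) < ε/16 := by
    have := hbr a1 hja1
    rw [ha12] at this
    exact this
  have hr3 : Real.logb k (a4:ℕ) - Real.logb k (a3:ℕ) < ε/16 := by
    have := hbr a3 hja3
    rw [← ha4] at this
    exact this
  have hrLlow : L - (Real.logb k (b2:ℕ) - Real.logb k (b1:ℕ)) < ε/8 := by
    have h1 := hbr b2 hjb2
    have h2 := hbr a2 hja2
    rw [show b2+1 = a3 from by omega] at h1
    rw [← hb1] at h2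
    calc L - (Real.logb k (b2:ℕ) - Real.logb k (b1:ℕ))
        = (Real.logb k (a3:ℕ) - Real.logb k (b2:ℕ))
          + (Real.logb k (b1:ℕ) - Real.logb k (a2:ℕ)) := by rw [← hr2]; ring
      _ < ε/16 + ε/16 := add_lt_add h1 h2
      _ = ε/8 := by ring
  have hppos : (0:ℝ) < (p:ℝ) := by exact_mod_cast (by omega : 0 < p)
  have h1p : 1/(p:ℝ) < ε/16 := by
    rw [div_lt_div_iff₀ hppos (by norm_num)]
    have h16 : 16 < (p:ℝ) * ε := (div_lt_iff₀ hε).1 hp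
    nlinarith [h16, hε, hppos]
  have hWval : Real.logb K (K:ℕ) - Real.logb K (C':ℕ) = 1 - 1/(p:ℝ) := by
    have hC2R : (2:ℝ) ≤ (C':ℝ) := by exact_mod_cast hC'2
    have hlogC : 0 < Real.log (C':ℝ) := Real.log_pos (by linarith)
    have hKcast : ((K:ℕ):ℝ) = (C':ℝ)^p := by rw [hK]; push_cast; ring
    have h1 : Real.logb K (K:ℕ) = 1 :=
      Real.logb_self_eq_one (b := ((K:ℕ):ℝ)) (by exact_mod_cast (by omega : 1 < K))
    have h2 : Real.logb K (C':ℕ) = 1/(p:ℝ) := by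
      unfold Real.logb
      rw [hKcast, Real.log_pow]
      rw [div_eq_div_iff (ne_of_gt (by positivity)) (ne_of_gt hppos)]
      push_cast
      ring
    rw [h1, h2]
  rw [hWval] at hWc
  have eWc : (1 : ℝ) - (1 - 1/(p:ℝ)) = 1/(p:ℝ) := by ring
  rw [eWc] at hWc
  rw [hr2] at hQ2
  -- analytic part
  set δ : ℝ := 1/((a3:ℕ):ℝ) with hδdef
  have hA3R : (4:ℝ) ≤ ((a3:ℕ):ℝ) := by exact_mod_cast ha3ge
  have hδpos : 0 < δ := by rw [hδdef]; positivity
  have hδ4 : δ ≤ 1/4 := by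
    rw [hδdef]
    rw [div_le_div_iff₀ (by linarith only [hA3R]) (by norm_num)]
    linarith only [hA3R]
  have hδa3 : δ * (((d:ℝ)+1)*(k:ℝ)^j) = 1 := by
    rw [← ha3R, hδdef]
    field_simp
  obtain ⟨n₁, hn₁⟩ := eventually_atTop.1 (Metric.tendsto_nhds.1 hasymp δ hδpos)
  have hbound : ∀ n, n₁ ≤ n → (1-δ)*|g n| ≤ |f n| ∧ |f n| ≤ (1+δ)*|g n| := by
    intro n hn
    have ht := hn₁ n hn
    rw [Real.dist_eq] at ht
    exact abs_ratio_bound (hg n) hδ4 ht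
  have hup : ∀ n, n₁ ≤ n → BeginsWith k d (g n) →
      ((Tset k a1 a2 (f n) ∨ Tset k a2 a3 (f n) ∨ Tset k a3 a4 (f n)) ∨ ¬ Tset K C' K (f n)) := by
    intro n hn hBW
    obtain ⟨hlg, hhg⟩ := hbound n hn
    have hC'R : ((C':ℕ):ℝ) = 2*((a3:ℕ):ℝ) := by rw [hC']; push_cast; ring
    have hK1R : (1:ℝ) ≤ (K:ℝ) := by exact_mod_cast (by omega : 1 ≤ K)
    exact key_up hkR1 hK1R ha1R ha3R ha4R hC'R hδa3 hδpos hδ4 hlg hhg hBW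
  have hlo' : ∀ n, n₁ ≤ n → Tset k b1 b2 (f n) → BeginsWith k d (g n) := by
    intro n hn hT
    obtain ⟨hlg, hhg⟩ := hbound n hn
    exact key_lo (by linarith only [hkR1]) hb1R hb2R hδa3 hδpos hδ4 hlg hhg hT
  -- counting
  have cU : ∀ N, cnt (fun n => BeginsWith k d (g n)) N ≤
      cnt (fun n => Tset k a1 a2 (f n)) N + cnt (fun n => Tset k a2 a3 (f n)) N
      + cnt (fun n => Tset k a3 a4 (f n)) N + cnt (fun n => ¬ Tset K C' K (f n)) N + n₁ := by
    intro N
    have h1 := cnt_le_of_imp_tail n₁ hup N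
    have h2 := cnt_or_le (fun n => Tset k a1 a2 (f n) ∨ Tset k a2 a3 (f n) ∨ Tset k a3 a4 (f n))
      (fun n => ¬ Tset K C' K (f n)) N
    have h3 := cnt_or_le (fun n => Tset k a1 a2 (f n))
      (fun n => Tset k a2 a3 (f n) ∨ Tset k a3 a4 (f n)) N
    have h4 := cnt_or_le (fun n => Tset k a2 a3 (f n)) (fun n => Tset k a3 a4 (f n)) N
    omega
  have cLo : ∀ N, cnt (fun n => Tset k b1 b2 (f n)) N ≤ cnt (fun n => BeginsWith k d (g n)) N + n₁ :=
    fun N => cnt_le_of_imp_tail n₁ hlo' N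
  -- eventual bounds
  have mk_ev : ∀ (F : ℕ → ℝ) (v : ℝ), Tendsto F atTop (𝓝 v) →
      ∀ᶠ N in atTop, |F N - v| < ε/16 := by
    intro F v hF
    have := Metric.tendsto_nhds.1 hF (ε/16) (by positivity)
    filter_upwards [this] with N hN
    rw [Real.dist_eq] at hN
    exact hN
  have E1 := mk_ev _ _ hQ1
  have E2 := mk_ev _ _ hQ2
  have E3 := mk_ev _ _ hQ3
  have E4 := mk_ev _ _ hWc
  have ELo := mk_ev _ _ hLo
  have E5 : ∀ᶠ N : ℕ in atTop, (n₁:ℝ)/(N:ℝ) < ε/16 := by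
    have := Metric.tendsto_nhds.1 (tendsto_const_div_atTop_nhds_zero_nat (n₁:ℝ)) (ε/16) (by positivity)
    filter_upwards [this] with N hN
    rw [Real.dist_eq, sub_zero] at hN
    exact lt_of_le_of_lt (le_abs_self _) hN
  filter_upwards [E1, E2, E3, E4, ELo, E5, eventually_ge_atTop 1] with N e1 e2 e3 e4 eLo e5 eN
  have hNpos : (0:ℝ) < (N:ℝ) := by exact_mod_cast (by omega : 0 < N)
  set x := (cnt (fun n => BeginsWith k d (g n)) N : ℝ)/(N:ℝ) with hx
  have habs1 := abs_lt.1 e1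
  have habs2 := abs_lt.1 e2
  have habs3 := abs_lt.1 e3
  have habs4 := abs_lt.1 e4
  have habsL := abs_lt.1 eLo
  have hxU : x ≤ (cnt (fun n => Tset k a1 a2 (f n)) N : ℝ)/(N:ℝ)
      + (cnt (fun n => Tset k a2 a3 (f n)) N : ℝ)/(N:ℝ)
      + (cnt (fun n => Tset k a3 a4 (f n)) N : ℝ)/(N:ℝ)
      + (cnt (fun n => ¬ Tset K C' K (f n)) N : ℝ)/(N:ℝ) + (n₁:ℝ)/(N:ℝ) := by
    rw [hx, ← add_div, ← add_div, ← add_div, ← add_div]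
    apply div_le_div_of_nonneg_right ?_ hNpos.le
    exact_mod_cast cU N
  have hxL : (cnt (fun n => Tset k b1 b2 (f n)) N : ℝ)/(N:ℝ) ≤ x + (n₁:ℝ)/(N:ℝ) := by
    rw [hx, ← add_div]
    apply div_le_div_of_nonneg_right ?_ hNpos.le
    exact_mod_cast cLo N
  rw [Real.dist_eq, abs_sub_lt_iff]
  clear_value x L
  constructor
  · linarith only [habs1.2, habs2.2, habs3.2, habs4.2, e5, hr1, hr3, h1p, hxU, hε]
  · linarith only [habsL.1, e5, hrLlow, hxL, hε]
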